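/- Let R be a consistent Riordan array, i.e., the Riordan array determined by a nonnegative A-sequence (a_n) and Z-sequence (z_n) with z_n = a_n for all n, and let r ≥ 1. If (a_n) is a Pólya frequency sequence of order r (PF_r), then R is totally positive of order r (TP_r). -/

import Mathlib

/-- An infinite real matrix `M` is totally positive of order `r` (TP_r) if every minor of
order `k ≤ r` (determinant of a `k × k` submatrix with rows and columns chosen in
increasing order) is nonnegative. -/
def IsTPOrder (r : ℕ) (M : ℕ → ℕ → ℝ) : Prop :=
  ∀ k : ℕ, k ≤ r → ∀ rows cols : Fin k → ℕ, StrictMono rows → StrictMono cols →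
    0 ≤ (Matrix.of fun i j => M (rows i) (cols j)).det

/-- The Toeplitz matrix `[a_{i-j}]` of a sequence `a` (with `a m = 0` for `m < 0`). -/
def toeplitz (a : ℕ → ℝ) : ℕ → ℕ → ℝ := fun i j => if j ≤ i then a (i - j) else 0

/-- A nonnegative sequence is a Pólya frequency sequence of order `r` (PF_r)
if its Toeplitz matrix is TP_r. -/
def IsPFOrder (r : ℕ) (a : ℕ → ℝ) : Prop := IsTPOrder r (toeplitz a)

open Equiv Equiv.Perm Finset Function Matrix

namespace RiordanTP


local notation "ε " σ:arg => ((Equiv.Perm.sign σ : ℤ) : ℝ)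

theorem det_mul_aux' {k N : ℕ} (A : Matrix (Fin k) (Fin N) ℝ) (B : Matrix (Fin N) (Fin k) ℝ)
    {p : Fin k → Fin N} (H : ¬Function.Injective p) :
    (∑ σ : Perm (Fin k), ε σ * ∏ x, A (σ x) (p x) * B (p x) x) = 0 := by
  obtain ⟨i, j, hpij, hij⟩ : ∃ i j, p i = p j ∧ i ≠ j := by
    rw [Function.Injective] at H
    push_neg at H
    exact H
  exact
    sum_involution (fun σ _ => σ * Equiv.swap i j)
      (fun σ _ => by
        have : (∏ x, A (σ x) (p x)) = ∏ x, A ((σ * Equiv.swap i j) x) (p x) :=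
          Fintype.prod_equiv (swap i j) _ _ (by simp [apply_swap_eq_self hpij])
        simp [this, sign_swap hij, -sign_swap', prod_mul_distrib])
      (fun σ _ _ => (not_congr mul_swap_eq_iff).mpr hij) (fun _ _ => mem_univ _) fun σ _ =>
      mul_swap_involutive i j σ

theorem perm_sum {k : ℕ} (M N : Matrix (Fin k) (Fin k) ℝ) :
    (∑ τ : Perm (Fin k), ∑ σ : Perm (Fin k), ε σ * ∏ i, M (σ i) (τ i) * N (τ i) i)
      = M.det * N.det :=
  calc
    (∑ τ : Perm (Fin k), ∑ σ : Perm (Fin k), ε σ * ∏ i, M (σ i) (τ i) * N (τ i) i)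
    _ = ∑ σ : Perm (Fin k), ∑ τ : Perm (Fin k),
          (∏ i, N (σ i) i) * ε τ * ∏ j, M (τ j) (σ j) := by
      simp only [mul_comm, mul_left_comm, prod_mul_distrib, mul_assoc]
    _ = ∑ σ : Perm (Fin k), ∑ τ : Perm (Fin k),
          (∏ i, N (σ i) i) * (ε σ * ε τ) * ∏ i, M (τ i) i :=
      (sum_congr rfl fun σ _ =>
        Fintype.sum_equiv (Equiv.mulRight σ⁻¹) _ _ fun τ => by
          have : (∏ j, M (τ j) (σ j)) = ∏ j, M ((τ * σ⁻¹) j) j := by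
            rw [← (σ⁻¹ : _ ≃ _).prod_comp]
            simp only [Equiv.Perm.coe_mul, Equiv.Perm.inv_def, Equiv.apply_symm_apply, Function.comp_apply]
          have h : ε σ * ε (τ * σ⁻¹) = ε τ :=
            calc
              ε σ * ε (τ * σ⁻¹) = ε (τ * σ⁻¹ * σ) := by
                rw [mul_comm, sign_mul (τ * σ⁻¹)]
                simp only [Int.cast_mul, Units.val_mul]
              _ = ε τ := by simp only [inv_mul_cancel_right]
          simp_rw [Equiv.coe_mulRight, h]
          simp only [this])
    _ = M.det * N.det := by
      simp only [det_apply', Finset.mul_sum, mul_comm, mul_left_comm, mul_assoc]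


lemma card_image_univ {k N : ℕ} {p : Fin k → Fin N} (hp : Function.Injective p) :
    (Finset.image p Finset.univ).card = k := by
  rw [Finset.card_image_of_injective _ hp, Finset.card_univ, Fintype.card_fin]

/-- The increasing rearrangement of an injective map `Fin k → Fin N`. -/
noncomputable def monoOf {k N : ℕ} (p : Fin k → Fin N) : Fin k → Fin N :=
  if h : (Finset.image p Finset.univ).card = k then
    (Finset.image p Finset.univ).orderEmbOfFin h else p

lemma monoOf_eq {k N : ℕ} {p : Fin k → Fin N} (hp : Function.Injective p) :
    monoOf p = (Finset.image p Finset.univ).orderEmbOfFin (card_image_univ hp) := by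
  simp only [monoOf, dif_pos (card_image_univ hp)]

lemma monoOf_strictMono {k N : ℕ} {p : Fin k → Fin N} (hp : Function.Injective p) :
    StrictMono (monoOf p) := by
  rw [monoOf_eq hp]; exact ((Finset.image p Finset.univ).orderEmbOfFin _).strictMono

/-- The permutation such that `p = monoOf p ∘ permOf p`. -/
noncomputable def permOf {k N : ℕ} (p : Fin k → Fin N) : Perm (Fin k) :=
  if h : Function.Injective p then
    Equiv.ofBijective
      (fun i => ((Finset.image p Finset.univ).orderIsoOfFin (card_image_univ h)).symm
        ⟨p i, Finset.mem_image_of_mem _ (Finset.mem_univ i)⟩)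
      (Finite.injective_iff_bijective.mp (fun i j hij => h (by
        have := congrArg (Subtype.val ∘
          ((Finset.image p Finset.univ).orderIsoOfFin (card_image_univ h))) hij
        simpa using this)))
  else 1

lemma monoOf_permOf {k N : ℕ} {p : Fin k → Fin N} (hp : Function.Injective p) (i : Fin k) :
    monoOf p (permOf p i) = p i := by
  rw [monoOf_eq hp, permOf, dif_pos hp]
  simp only [Equiv.ofBijective_apply]
  rw [← Finset.coe_orderIsoOfFin_apply]
  simp

lemma monoOf_comp {k N : ℕ} {m : Fin k → Fin N} (hm : StrictMono m) (τ : Perm (Fin k)) :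
    monoOf (m ∘ τ) = m := by
  have hp : Function.Injective (m ∘ τ) := hm.injective.comp τ.injective
  rw [monoOf_eq hp]
  refine (Finset.orderEmbOfFin_unique (card_image_univ hp) (fun x => ?_) hm).symm
  exact Finset.mem_image.mpr ⟨τ.symm x, Finset.mem_univ _, by simp⟩

lemma permOf_comp {k N : ℕ} {m : Fin k → Fin N} (hm : StrictMono m) (τ : Perm (Fin k)) :
    permOf (m ∘ τ) = τ := by
  have hp : Function.Injective (m ∘ τ) := hm.injective.comp τ.injective
  ext i
  have h1 : monoOf (m ∘ τ) (permOf (m ∘ τ) i) = m (τ i) := monoOf_permOf hp i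
  rw [monoOf_comp hm] at h1
  exact congrArg Fin.val (hm.injective h1)

theorem cauchy_binet {k N : ℕ} (A : Matrix (Fin k) (Fin N) ℝ) (B : Matrix (Fin N) (Fin k) ℝ) :
    (A * B).det = ∑ f ∈ Finset.univ.filter (fun f : Fin k → Fin N => StrictMono f),
      (A.submatrix id f).det * (B.submatrix f id).det :=
  calc
    (A * B).det
    _ = ∑ p : Fin k → Fin N, ∑ σ : Perm (Fin k), ε σ * ∏ i, A (σ i) (p i) * B (p i) i := by
      simp only [det_apply', Matrix.mul_apply, prod_univ_sum, mul_sum, Fintype.piFinset_univ]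
      rw [Finset.sum_comm]
      
    _ = ∑ p ∈ Finset.univ.filter (fun p : Fin k → Fin N => Function.Injective p),
          ∑ σ : Perm (Fin k), ε σ * ∏ i, A (σ i) (p i) * B (p i) i := by
      refine (sum_subset (filter_subset _ _) fun p _ hp => det_mul_aux' A B ?_).symm
      simpa only [true_and, mem_filter, mem_univ] using hp
    _ = ∑ q ∈ (Finset.univ.filter (fun m : Fin k → Fin N => StrictMono m)) ×ˢ
          (Finset.univ : Finset (Perm (Fin k))),
          ∑ σ : Perm (Fin k), ε σ * ∏ i, A (σ i) ((q.1 ∘ q.2) i) * B ((q.1 ∘ q.2) i) i := by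
      refine Finset.sum_nbij' (fun p => (monoOf p, permOf p)) (fun q => q.1 ∘ q.2)
        ?_ ?_ ?_ ?_ ?_
      · intro p hp
        have hpi : Function.Injective p := (mem_filter.mp hp).2
        simp only [Finset.mem_product, mem_filter, mem_univ, true_and, and_true]
        exact monoOf_strictMono hpi
      · intro q hq
        have hq1 : StrictMono q.1 := by
          simpa only [Finset.mem_product, mem_filter, mem_univ, true_and, and_true] using hq
        simp only [mem_filter, mem_univ, true_and]
        exact hq1.injective.comp q.2.injective
      · intro p hp
        have hpi : Function.Injective p := (mem_filter.mp hp).2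
        funext i
        exact monoOf_permOf hpi i
      · intro q hq
        have hq1 : StrictMono q.1 := by
          simpa only [Finset.mem_product, mem_filter, mem_univ, true_and, and_true] using hq
        exact Prod.ext (monoOf_comp hq1 q.2) (permOf_comp hq1 q.2)
      · intro p hp
        have hpi : Function.Injective p := (mem_filter.mp hp).2
        dsimp only
        refine Finset.sum_congr rfl fun σ _ => ?_
        congr 1
        refine Finset.prod_congr rfl fun i _ => ?_
        rw [Function.comp_apply, monoOf_permOf hpi]
    _ = ∑ m ∈ Finset.univ.filter (fun m : Fin k → Fin N => StrictMono m), ∑ τ : Perm (Fin k),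
          ∑ σ : Perm (Fin k), ε σ * ∏ i, A (σ i) (m (τ i)) * B (m (τ i)) i := by
      rw [Finset.sum_product]
      rfl
    _ = ∑ f ∈ Finset.univ.filter (fun f : Fin k → Fin N => StrictMono f),
        (A.submatrix id f).det * (B.submatrix f id).det :=
      Finset.sum_congr rfl fun m _ => perm_sum (A.submatrix id m) (B.submatrix m id)


/-- The production-type matrix of a consistent Riordan array. -/
def Pmat (a : ℕ → ℝ) : ℕ → ℕ → ℝ := fun m c => toeplitz a m (c - 1)

lemma Pmat_TP {a : ℕ → ℝ} {r : ℕ} (hPF : IsPFOrder r a) : IsTPOrder r (Pmat a) := by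
  intro k hk rows cols hrows hcols
  by_cases hinj : Function.Injective (fun j => cols j - 1)
  · have hmono : Monotone (fun j => cols j - 1) :=
      fun i j h => Nat.sub_le_sub_right (hcols.monotone h) 1
    exact hPF k hk rows (fun j => cols j - 1) hrows (hmono.strictMono_of_injective hinj)
  · obtain ⟨j1, j2, hj, hne⟩ := Function.not_injective_iff.mp hinj
    refine le_of_eq (Matrix.det_zero_of_column_eq hne fun i => ?_).symm
    show Pmat a (rows i) (cols j1) = Pmat a (rows i) (cols j2)
    simp only [Pmat]
    rw [show cols j1 - 1 = cols j2 - 1 from hj]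

end RiordanTP

open RiordanTP
theorem consistent_riordan_TPOrder_of_PFOrder (a z : ℕ → ℝ) (ha : ∀ n, 0 ≤ a n) (hz : ∀ n, 0 ≤ z n)
    (hcons : ∀ n, z n = a n) (r : ℕ) (hr : 1 ≤ r)
    (R : ℕ → ℕ → ℝ)
    (hR00 : R 0 0 = 1)
    (htri : ∀ n k, n < k → R n k = 0)
    (hZ : ∀ n, R (n + 1) 0 = ∑ j ∈ Finset.range (n + 1), z j * R n j)
    (hA : ∀ n k, R (n + 1) (k + 1) = ∑ j ∈ Finset.range (n + 1), a j * R n (k + j))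
    (hPF : IsPFOrder r a) :
    IsTPOrder r R := by
  -- the basic recurrence in production-matrix form
  have key : ∀ n c, R (n + 1) c = ∑ m ∈ Finset.range (n + 1), R n m * Pmat a m c := by
    intro n c
    match c with
    | 0 =>
      rw [hZ]
      refine Finset.sum_congr rfl fun j hj => ?_
      have hP : Pmat a j 0 = a j := by simp [Pmat, toeplitz]
      rw [hP, hcons, mul_comm]
    | (cc + 1) =>
      rw [hA]
      have hP : ∀ m : ℕ, Pmat a m (cc + 1) = if cc ≤ m then a (m - cc) else 0 := by
        intro m; simp [Pmat, toeplitz]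
      have h1 : ∑ m ∈ Finset.range (n + 1), R n m * Pmat a m (cc + 1)
          = ∑ m ∈ Finset.range (cc + (n + 1)), R n m * Pmat a m (cc + 1) := by
        refine Finset.sum_subset (Finset.range_subset_range.mpr (by omega)) fun m hm hnot => ?_
        rw [Finset.mem_range] at hm
        rw [Finset.mem_range] at hnot
        rw [htri n m (by omega), zero_mul]
      have h2 : ∑ m ∈ Finset.range (cc + (n + 1)), R n m * Pmat a m (cc + 1)
          = ∑ m ∈ Finset.Ico cc (cc + (n + 1)), R n m * Pmat a m (cc + 1) := by
        rw [Finset.range_eq_Ico,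
          ← Finset.sum_Ico_consecutive _ (Nat.zero_le cc) (Nat.le_add_right cc (n + 1))]
        have hz0 : ∑ m ∈ Finset.Ico 0 cc, R n m * Pmat a m (cc + 1) = 0 := by
          refine Finset.sum_eq_zero fun m hm => ?_
          have hmlt : m < cc := (Finset.mem_Ico.mp hm).2
          rw [hP m, if_neg (by omega), mul_zero]
        rw [hz0, zero_add]
      rw [h1, h2, Finset.sum_Ico_eq_sum_range]
      have hrange : cc + (n + 1) - cc = n + 1 := by omega
      rw [hrange]
      refine Finset.sum_congr rfl fun j hj => ?_
      rw [hP (cc + j), if_pos (Nat.le_add_right cc j)]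
      have : cc + j - cc = j := by omega
      rw [this, mul_comm]
  have keyN : ∀ n c N', n + 1 ≤ N' →
      R (n + 1) c = ∑ m ∈ Finset.range N', R n m * Pmat a m c := by
    intro n c N' hN'
    rw [key n c]
    refine Finset.sum_subset (Finset.range_subset_range.mpr hN') fun m hm hnot => ?_
    rw [Finset.mem_range] at hnot
    rw [htri n m (by omega), zero_mul]
  -- main induction on (sum of row indices) + size
  suffices main : ∀ S : ℕ, ∀ k : ℕ, k ≤ r → ∀ rows cols : Fin k → ℕ,
      StrictMono rows → StrictMono cols → (∑ i, rows i) + k ≤ S →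
      0 ≤ (Matrix.of fun i j => R (rows i) (cols j)).det by
    intro k hk rows cols hrows hcols
    exact main ((∑ i, rows i) + k) k hk rows cols hrows hcols le_rfl
  intro S
  induction S with
  | zero =>
    intro k hk rows cols _ _ hS
    have hk0 : k = 0 := by omega
    subst hk0
    rw [Matrix.det_isEmpty]
    norm_num
  | succ S IH =>
    intro k hk rows cols hrows hcols hS
    by_cases hk0 : k = 0
    · subst hk0
      rw [Matrix.det_isEmpty]
      norm_num
    · obtain ⟨k', rfl⟩ : ∃ k', k = k' + 1 := ⟨k - 1, by omega⟩
      by_cases h0 : rows 0 = 0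
      · by_cases hc0 : cols 0 = 0
        · -- expand along the first row, which is (1,0,...,0)
          rw [Matrix.det_succ_row_zero]
          have hzero : ∀ j : Fin (k' + 1), j ≠ 0 →
              (-1 : ℝ) ^ (j : ℕ) * (Matrix.of fun i j => R (rows i) (cols j)) 0 j *
                ((Matrix.of fun i j => R (rows i) (cols j)).submatrix Fin.succ j.succAbove).det
                = 0 := by
            intro j hj
            have hcj : 0 < cols j := by
              have := hcols (show (0 : Fin (k' + 1)) < j by
                exact lt_of_le_of_ne (Fin.zero_le j) (Ne.symm hj))
              omega
            have : (Matrix.of fun i j => R (rows i) (cols j)) 0 j = 0 := by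
              show R (rows 0) (cols j) = 0
              rw [h0]
              exact htri 0 (cols j) hcj
            rw [this, mul_zero, zero_mul]
          rw [Fintype.sum_eq_single (0 : Fin (k' + 1)) hzero]
          have hentry : (Matrix.of fun i j => R (rows i) (cols j)) 0 0 = 1 := by
            show R (rows 0) (cols 0) = 1
            rw [h0, hc0, hR00]
          rw [hentry]
          simp only [Fin.val_zero, pow_zero, one_mul, Fin.succAbove_zero]
          have hsub : ((Matrix.of fun i j => R (rows i) (cols j)).submatrix Fin.succ Fin.succ)
              = Matrix.of fun i j => R ((rows ∘ Fin.succ) i) ((cols ∘ Fin.succ) j) := rfl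
          rw [hsub]
          refine IH k' (by omega) (rows ∘ Fin.succ) (cols ∘ Fin.succ)
            (hrows.comp (Fin.strictMono_succ)) (hcols.comp (Fin.strictMono_succ)) ?_
          have hsum : ∑ i : Fin (k' + 1), rows i
              = rows 0 + ∑ i : Fin k', rows (Fin.succ i) := Fin.sum_univ_succ rows
          rw [h0, zero_add] at hsum
          have : ∑ i : Fin k', (rows ∘ Fin.succ) i = ∑ i : Fin k', rows (Fin.succ i) := rfl
          omega
        · -- first row of the minor is identically zero
          refine le_of_eq (Matrix.det_eq_zero_of_row_eq_zero 0 fun j => ?_).symm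
          show R (rows 0) (cols j) = 0
          rw [h0]
          have hcj : 0 < cols j := by
            have := hcols.monotone (Fin.zero_le j)
            omega
          exact htri 0 (cols j) hcj
      · -- all row indices are positive: use the recurrence and Cauchy-Binet
        have hpos : ∀ i, 1 ≤ rows i := by
          intro i
          have := hrows.monotone (Fin.zero_le i)
          omega
        set N' : ℕ := (∑ i, rows i) + 1 with hN'def
        have hlt : ∀ i, rows i < N' := by
          intro i
          have : rows i ≤ ∑ i, rows i :=
            Finset.single_le_sum (fun i _ => Nat.zero_le (rows i)) (Finset.mem_univ i)
          omega
        set A : Matrix (Fin (k' + 1)) (Fin N') ℝ :=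
          Matrix.of fun i m => R (rows i - 1) (m : ℕ) with hAdef
        set B : Matrix (Fin N') (Fin (k' + 1)) ℝ :=
          Matrix.of fun m j => Pmat a (m : ℕ) (cols j) with hBdef
        have hAB : (Matrix.of fun i j => R (rows i) (cols j)) = A * B := by
          ext i j
          show R (rows i) (cols j) = (A * B) i j
          rw [Matrix.mul_apply]
          have h1 : R (rows i) (cols j) = R ((rows i - 1) + 1) (cols j) := by
            rw [Nat.sub_add_cancel (hpos i)]
          rw [h1, keyN (rows i - 1) (cols j) N' (by have := hlt i; omega)]
          rw [← Fin.sum_univ_eq_sum_range (fun m => R (rows i - 1) m * Pmat a m (cols j)) N']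
          rfl
        rw [hAB, cauchy_binet]
        refine Finset.sum_nonneg fun f hf => ?_
        have hfm : StrictMono f := (Finset.mem_filter.mp hf).2
        refine mul_nonneg ?_ ?_
        · have hsubA : A.submatrix id f
              = Matrix.of fun i j => R ((fun i => rows i - 1) i) ((fun j => ((f j : ℕ))) j) := rfl
          rw [hsubA]
          refine IH (k' + 1) hk (fun i => rows i - 1) (fun j => (f j : ℕ))
            (fun i j hij => ?_) (fun i j hij => ?_) ?_
          · have h1 := hrows hij
            have h2 := hpos i
            show rows i - 1 < rows j - 1
            omega
          · exact hfm hij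
          · have hsum : ∑ i : Fin (k' + 1), (rows i - 1) + (k' + 1)
                = ∑ i : Fin (k' + 1), rows i := by
              have h1 : ∑ i : Fin (k' + 1), ((rows i - 1) + 1) = ∑ i : Fin (k' + 1), rows i :=
                Finset.sum_congr rfl fun i _ => Nat.succ_pred_eq_of_pos (hpos i)
              rw [Finset.sum_add_distrib] at h1
              simpa using h1
            show ∑ i : Fin (k' + 1), (rows i - 1) + (k' + 1) ≤ S
            omega
        · have hsubB : B.submatrix f id
              = Matrix.of fun i j => Pmat a ((fun i => ((f i : ℕ))) i) (cols j) := rfl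
          rw [hsubB]
          exact Pmat_TP hPF (k' + 1) hk (fun i => (f i : ℕ)) cols (fun i j hij => hfm hij) hcols
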